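/- arXiv:2008.06005 — 3 statements merged into one kernel-verified Lean document; each statement's English description precedes it below -/
import Mathlib

section
/- Let C be a category with a descending chain of ideals rad^ν indexed by ordinals, where rad^0 is all morphisms, rad^{n+1} is generated by compositions of n+1 morphisms of rad^1, rad^ν = ⋂_{λ<ν} rad^λ for limit ν, and rad^{λ+n} = (rad^λ)^{n+1} for limit λ and n ≥ 1. Define rk(f) = ν if f ∈ rad^ν \ rad^{ν+1}, and rk(f) = ∞ if f lies in every rad^ν. If f = h ∘ g with rk(g) ≥ ν and rk(h) ≥ ν for some ordinal ν ≥ 1, then rk(f) > ν (i.e., f ∈ rad^{ν+1}). -/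
open CategoryTheory

universe w

/-- An ordinal-indexed descending chain of two-sided ideals `rad^ν` of a category, satisfying
the defining recurrences of the transfinite powers of the radical:
`rad^0` is everything, `rad^{n+1}` (finite `n ≥ 1`) is generated by compositions of a morphism
of `rad^n` with a morphism of `rad^1`, `rad^ν = ⋂_{μ<ν} rad^μ` at limits, and
`rad^{λ+n+1} = rad^{λ+n} ∘ rad^λ` for `λ` a limit ordinal. -/
structure RadChain (C : Type*) [Category C] where
  rad : Ordinal.{w} → ∀ X Y : C, Set (X ⟶ Y)
  ideal_post : ∀ (ν : Ordinal) (X Y Z : C) (f : X ⟶ Y) (g : Y ⟶ Z),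
    f ∈ rad ν X Y → f ≫ g ∈ rad ν X Z
  ideal_pre : ∀ (ν : Ordinal) (X Y Z : C) (f : Y ⟶ Z) (g : X ⟶ Y),
    f ∈ rad ν Y Z → g ≫ f ∈ rad ν X Z
  rad_zero : ∀ X Y : C, rad 0 X Y = Set.univ
  rad_succ_fin : ∀ n : ℕ, 1 ≤ n → ∀ (X Y : C) (f : X ⟶ Y),
    (f ∈ rad (n + 1) X Y ↔
      ∃ (Z : C) (g : X ⟶ Z) (h : Z ⟶ Y), g ∈ rad n X Z ∧ h ∈ rad 1 Z Y ∧ f = g ≫ h)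
  rad_limit : ∀ ν : Ordinal, Order.IsSuccLimit ν → ∀ (X Y : C) (f : X ⟶ Y),
    (f ∈ rad ν X Y ↔ ∀ μ < ν, f ∈ rad μ X Y)
  rad_limit_succ : ∀ lam : Ordinal, Order.IsSuccLimit lam → ∀ (n : ℕ) (X Y : C) (f : X ⟶ Y),
    (f ∈ rad (lam + (n + 1)) X Y ↔
      ∃ (Z : C) (g : X ⟶ Z) (h : Z ⟶ Y),
        g ∈ rad (lam + n) X Z ∧ h ∈ rad lam Z Y ∧ f = g ≫ h)

private lemma radchain_decomp (ν : Ordinal) :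
    (∃ n : ℕ, ν = n) ∨ (∃ lam : Ordinal, ∃ n : ℕ, Order.IsSuccLimit lam ∧ ν = lam + n) := by
  induction ν using Ordinal.limitRecOn with
  | zero => exact Or.inl ⟨0, by simp⟩
  | add_one ν ih =>
    rcases ih with ⟨n, rfl⟩ | ⟨lam, n, hlim, rfl⟩
    · exact Or.inl ⟨n + 1, by push_cast; rfl⟩
    · exact Or.inr ⟨lam, n + 1, hlim, by push_cast; rw [add_assoc]⟩
  | limit ν hlim _ => exact Or.inr ⟨ν, 0, hlim, by simp⟩

private lemma radchain_nat_sub_one {C : Type*} [Category C] (R : RadChain C)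
    {n : ℕ} (hn : 1 ≤ n) {A B : C} {f : A ⟶ B} (hf : f ∈ R.rad n A B) :
    f ∈ R.rad 1 A B := by
  match n, hn with
  | 1, _ => exact_mod_cast hf
  | (m+2), _ =>
    have hf' : f ∈ R.rad ((m + 1 : ℕ) + 1) A B := by push_cast at hf ⊢; rw [show ((m:Ordinal) + 1 + 1) = (m:Ordinal) + 2 by rw [add_assoc, one_add_one_eq_two]]; exact hf
    obtain ⟨W, a, b, _, hb, rfl⟩ := (R.rad_succ_fin (m+1) (by omega) A B f).mp hf'
    exact R.ideal_pre 1 A W B b a hb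

/-- If `f = h ∘ g` with `rk(g) ≥ ν` and `rk(h) ≥ ν` for some ordinal `ν ≥ 1`
(membership `g ∈ rad^ν`, `h ∈ rad^ν`), then `rk(f) > ν`, i.e. `f ∈ rad^{ν+1}`. -/
theorem rank_comp_gt {C : Type*} [Category C] (R : RadChain C) {X Z Y : C}
    (ν : Ordinal) (hν : 1 ≤ ν) (g : X ⟶ Z) (h : Z ⟶ Y) (f : X ⟶ Y)
    (hf : f = g ≫ h) (hg : g ∈ R.rad ν X Z) (hh : h ∈ R.rad ν Z Y) :
    f ∈ R.rad (ν + 1) X Y := by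
  subst hf
  rcases radchain_decomp ν with ⟨n, rfl⟩ | ⟨lam, n, hlim, rfl⟩
  · have hn : 1 ≤ n := by exact_mod_cast hν
    exact (R.rad_succ_fin n hn X Y (g ≫ h)).mpr
      ⟨Z, g, h, hg, radchain_nat_sub_one R hn hh, rfl⟩
  · have hhl : h ∈ R.rad lam Z Y := by
      match n with
      | 0 => simpa using hh
      | (m+1) =>
        have hh' : h ∈ R.rad (lam + ((m : Ordinal) + 1)) Z Y := by push_cast at hh ⊢; exact hh
        obtain ⟨W, a, b, _, hb, rfl⟩ := (R.rad_limit_succ lam hlim m Z Y h).mp hh'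
        exact R.ideal_pre lam Z W Y b a hb
    have : g ≫ h ∈ R.rad (lam + ((n : Ordinal) + 1)) X Y :=
      (R.rad_limit_succ lam hlim n X Y (g ≫ h)).mpr ⟨Z, g, h, hg, hhl, rfl⟩
    rwa [← add_assoc] at this
end

section
/- Let Λ be a string algebra. A string algebra has only finitely many prime bands. More precisely, if m is an absolute bound on the length of any direct string (path in Q avoiding relations) and n is the number of two-letter strings of the form aB with a, b arrows, then the length of any prime band is absolutely bounded, hence the set of prime bands is finite. -/
/-- A quiver with a set of monomial relations, presenting a string algebra. -/
structure SAQuiver where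
  V : Type
  A : Type
  src : A → V
  tgt : A → V
  rel : Set (List A)

namespace SA

variable (S : SAQuiver)

/-- A syllable: a direct arrow (`Sum.inl`) or the formal inverse of an arrow (`Sum.inr`). -/
abbrev Syl := S.A ⊕ S.A

/-- A word of syllables, listed in order of traversal (the head is the first,
i.e. rightmost, syllable in the usual right-to-left notation `αₙ…α₁`). -/
abbrev Word := List (Syl S)

def sylSrc : Syl S → S.V
  | Sum.inl a => S.src a
  | Sum.inr a => S.tgt a

def sylTgt : Syl S → S.V
  | Sum.inl a => S.tgt a
  | Sum.inr a => S.src a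

def sylInv : Syl S → Syl S
  | Sum.inl a => Sum.inr a
  | Sum.inr a => Sum.inl a

/-- Consecutive syllables compose as a walk. -/
def IsWalk : Word S → Prop
  | [] => True
  | [_] => True
  | x :: y :: l => sylTgt S x = sylSrc S y ∧ IsWalk (y :: l)

/-- No two consecutive syllables are inverse to each other. -/
def Reduced : Word S → Prop
  | x :: y :: l => y ≠ sylInv S x ∧ Reduced (y :: l)
  | _ => True

/-- No subword is a relation or the inverse of a relation. -/
def AvoidsRel (w : Word S) : Prop :=
  ∀ p ∈ S.rel, ¬ ((p.map (Sum.inl : S.A → Syl S)) <:+: w) ∧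
    ¬ ((p.map (Sum.inr : S.A → Syl S)).reverse <:+: w)

/-- A (finite, nonempty) string. -/
def IsStr (w : Word S) : Prop :=
  w ≠ [] ∧ IsWalk S w ∧ Reduced S w ∧ AvoidsRel S w

def wSrc : Word S → Option S.V
  | [] => none
  | x :: _ => some (sylSrc S x)

def wTgt (w : Word S) : Option S.V := w.getLast?.map (sylTgt S)

/-- A cyclic word: its target equals its source. -/
def Cyclic (w : Word S) : Prop := w ≠ [] ∧ wSrc S w = wTgt S w

/-- The `n`-th power of a word under concatenation. -/
def pow (w : Word S) (n : ℕ) : Word S := (List.replicate n w).flatten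

/-- A word containing both a direct and an inverse syllable. -/
def Mixed (w : Word S) : Prop := (∃ a, Sum.inl a ∈ w) ∧ (∃ a, Sum.inr a ∈ w)

/-- A word that is not a proper power of a shorter word. -/
def Primitive (w : Word S) : Prop := ¬ ∃ (u : Word S) (k : ℕ), 2 ≤ k ∧ w = pow S u k

/-- A rotation (cyclic permutation) of a word. -/
def IsRotation (u w : Word S) : Prop := ∃ l₁ l₂ : Word S, w = l₁ ++ l₂ ∧ u = l₂ ++ l₁

/-- A band: a primitive mixed cyclic string, all of whose powers are strings, whose first
syllable is inverse and whose last syllable is direct. -/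
def IsBand (w : Word S) : Prop :=
  IsStr S w ∧ Cyclic S w ∧ Primitive S w ∧
    (∃ a, w.head? = some (Sum.inr a)) ∧ (∃ a, w.getLast? = some (Sum.inl a)) ∧
    ∀ n : ℕ, 1 ≤ n → IsStr S (pow S w n)

/-- A cyclic permutation of a band. -/
def RotOfBand (u : Word S) : Prop := ∃ b, IsBand S b ∧ IsRotation S u b

/-- A prime band: no cyclic permutation of it is a concatenation of two or more cyclic
permutations of bands. -/
def IsPrimeBand (w : Word S) : Prop :=
  IsBand S w ∧
    ¬ ∃ (w' : Word S) (parts : List (Word S)), IsRotation S w' w ∧ 2 ≤ parts.length ∧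
        w' = parts.flatten ∧ ∀ p ∈ parts, RotOfBand S p

/-- A word containing no cyclic permutation of a band as a subword. -/
def BandFree (w : Word S) : Prop := ¬ ∃ u, RotOfBand S u ∧ u <:+: w

/-- A word all of whose syllables are direct. -/
def DirectWord (w : Word S) : Prop := ∀ x ∈ w, ∃ a, x = Sum.inl a

/-- A word all of whose syllables are inverse. -/
def InverseWord (w : Word S) : Prop := ∀ x ∈ w, ∃ a, x = Sum.inr a

/-- A string which is a substring of a cyclic permutation of a band. -/
def Extendable (w : Word S) : Prop := ∃ u, RotOfBand S u ∧ w <:+: u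

/-- The axioms for `(Q, ρ)` to present a string algebra. -/
def IsStringAlgebra : Prop :=
  Finite S.V ∧ Finite S.A ∧
  (∀ p ∈ S.rel, p ≠ [] ∧ IsWalk S (p.map (Sum.inl : S.A → Syl S))) ∧
  {p : List S.A | p ≠ [] ∧ IsWalk S (p.map (Sum.inl : S.A → Syl S)) ∧
      ∀ q ∈ S.rel, ¬ (q <:+: p)}.Finite ∧
  (∀ v : S.V, ¬ ∃ a b c : S.A, a ≠ b ∧ b ≠ c ∧ a ≠ c ∧
      S.src a = v ∧ S.src b = v ∧ S.src c = v) ∧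
  (∀ v : S.V, ¬ ∃ a b c : S.A, a ≠ b ∧ b ≠ c ∧ a ≠ c ∧
      S.tgt a = v ∧ S.tgt b = v ∧ S.tgt c = v) ∧
  (∀ b c₁ c₂ : S.A, c₁ ≠ c₂ → IsStr S [Sum.inl b, Sum.inl c₁] →
      ¬ IsStr S [Sum.inl b, Sum.inl c₂]) ∧
  (∀ b a₁ a₂ : S.A, a₁ ≠ a₂ → IsStr S [Sum.inl a₁, Sum.inl b] →
      ¬ IsStr S [Sum.inl a₂, Sum.inl b])

end SA

namespace SA

variable (S : SAQuiver)

/-! ### Sign functions and hammocks -/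

/-- `σ` of a syllable: `σ(a) = σ a`, `σ(B) = ε b`. -/
def sylSg (σ ε : S.A → ℤ) : Syl S → ℤ
  | Sum.inl a => σ a
  | Sum.inr a => ε a

/-- `ε` of a syllable: `ε(a) = ε a`, `ε(B) = σ b`. -/
def sylEp (σ ε : S.A → ℤ) : Syl S → ℤ
  | Sum.inl a => ε a
  | Sum.inr a => σ a

/-- The conditions on the chosen sign maps `σ, ε : Q₁ → {±1}`. -/
def SignOK (σ ε : S.A → ℤ) : Prop :=
  (∀ a, σ a = 1 ∨ σ a = -1) ∧ (∀ a, ε a = 1 ∨ ε a = -1) ∧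
  (∀ a b, a ≠ b → S.src a = S.src b → σ a = -σ b) ∧
  (∀ a b, a ≠ b → S.tgt a = S.tgt b → ε a = -ε b) ∧
  (∀ c b : S.A, IsStr S [Sum.inl c, Sum.inl b] → σ b = -ε c)

/-- Membership in the hammock `H_r(v)`: strings ending at `v` with `ε`-value `1`;
the empty word stands for the lazy string `1_{(v,1)}`. -/
def HrMem (σ ε : S.A → ℤ) (v : S.V) (w : Word S) : Prop :=
  w = [] ∨ (IsStr S w ∧ wTgt S w = some v ∧
    ∃ s, w.getLast? = some s ∧ sylEp S σ ε s = 1)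

/-- The order `<_r` on `H_r(v)`:  `u <_r v` iff `v = u a x`, or `u = v B y`, or
`v = z a x ∧ u = z B y`. -/
def ltr (u v : Word S) : Prop :=
  (∃ (a : S.A) (x : Word S), v = x ++ [Sum.inl a] ++ u) ∨
  (∃ (b : S.A) (y : Word S), u = y ++ [Sum.inr b] ++ v) ∨
  (∃ (a b : S.A) (x y z : Word S),
      v = x ++ [Sum.inl a] ++ z ∧ u = y ++ [Sum.inr b] ++ z)

/-- The inverse of a word. -/
def wInv (w : Word S) : Word S := (w.map (sylInv S)).reverse

/-- Membership in the hammock `H_l(v)`: strings starting at `v` with `σ`-value `-1`;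
the empty word stands for the lazy string `1_{(v,-1)}`'s role in `H_l(v)`. -/
def HlMem (σ ε : S.A → ℤ) (v : S.V) (w : Word S) : Prop :=
  w = [] ∨ (IsStr S w ∧ wSrc S w = some v ∧
    ∃ s, w.head? = some s ∧ sylSg S σ ε s = -1)

/-- The order `<_l` on `H_l(v)`: `u <_l v` iff `v⁻¹ <_r u⁻¹`. -/
def ltl (u v : Word S) : Prop := ltr S (wInv S v) (wInv S u)

/-- `v` is the direct successor of `u` in the total order `lt` restricted to `P`. -/
def DirSucc (P : Word S → Prop) (lt : Word S → Word S → Prop) (u v : Word S) : Prop :=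
  P u ∧ P v ∧ lt u v ∧ ¬ ∃ w, P w ∧ lt u w ∧ lt w v

/-- A finite interval (chain of consecutive elements) in a hammock whose length sequence is
monotone. -/
def MonoChain (P : Word S → Prop) (lt : Word S → Word S → Prop) (n : ℕ)
    (c : ℕ → Word S) : Prop :=
  (∀ i < n, DirSucc S P lt (c i) (c (i + 1))) ∧
  ((∀ i < n, (c i).length < (c (i + 1)).length) ∨
   (∀ i < n, (c (i + 1)).length < (c i).length))

/-- Torsion-freeness for one hammock: every finite interval with monotone length sequence
extends (on one of its two ends) to a strictly larger such interval. -/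
def TFfor (P : Word S → Prop) (lt : Word S → Word S → Prop) : Prop :=
  ∀ (n : ℕ) (c : ℕ → Word S), MonoChain S P lt n c →
    ∃ c' : ℕ → Word S, MonoChain S P lt (n + 1) c' ∧
      ((∀ i ≤ n, c' i = c i) ∨ (∀ i ≤ n, c' (i + 1) = c i))

/-- A torsion-free string algebra: both the left and right hammock conditions hold at
every vertex. -/
def TorsionFree (σ ε : S.A → ℤ) : Prop :=
  (∀ v : S.V, TFfor S (HrMem S σ ε v) (ltr S)) ∧
  (∀ v : S.V, TFfor S (HlMem S σ ε v) (ltl S))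

/-! ### Bridges and the bridge quiver -/

/-- A weak bridge `b₁ → b₂`: a band-free string `u` (possibly of length zero) such that
`b₂ u b₁` is a string. -/
def IsWeakBridge (b₁ u b₂ : Word S) : Prop :=
  IsPrimeBand S b₁ ∧ IsPrimeBand S b₂ ∧ BandFree S u ∧ IsStr S (b₁ ++ u ++ b₂)

/-- A bridge: a weak bridge which does not factor through another prime band. -/
def IsBridge (b₁ u b₂ : Word S) : Prop :=
  IsWeakBridge S b₁ u b₂ ∧
  ¬ ∃ (bb u₁ u₂ : Word S), IsPrimeBand S bb ∧ IsWeakBridge S b₁ u₁ bb ∧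
      IsWeakBridge S bb u₂ b₂ ∧
      ((u = u₁ ++ u₂ ∧ u₁ ≠ [] ∧ u₂ ≠ []) ∨
       (∃ u₁' u₂' u₁'' u₂'' : Word S, u = u₁' ++ u₂' ∧ u₁' ≠ [] ∧ u₂' ≠ [] ∧
          u₁ = u₁' ++ u₁'' ∧ u₂ = u₂'' ++ u₂' ∧ bb = u₁'' ++ u₂''))

/-- `R` is a set of representatives of the prime bands up to cyclic permutation. -/
def RepSet (R : Set (Word S)) : Prop :=
  (∀ r ∈ R, IsPrimeBand S r) ∧
  ∀ b, IsPrimeBand S b → ∃! r, r ∈ R ∧ IsRotation S b r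

/-- One arrow of the bridge quiver with vertex set `R`. -/
def Step (R : Set (Word S)) (x y : Word S) : Prop :=
  x ∈ R ∧ y ∈ R ∧ ∃ u, IsBridge S x u y

/-- Reachability by a directed path in the bridge quiver. -/
def Reach (R : Set (Word S)) : Word S → Word S → Prop :=
  Relation.ReflTransGen (Step S R)

/-- Adjacency (in either direction) in the bridge quiver. -/
def Adj (R : Set (Word S)) (x y : Word S) : Prop := Step S R x y ∨ Step S R y x

/-- Lying in the same connected component of the bridge quiver. -/
def SameComp (R : Set (Word S)) : Word S → Word S → Prop :=
  Relation.ReflTransGen (Adj S R)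

/-- `x` lies on a meta-band, i.e. on a directed cycle of positive length in the bridge
quiver. -/
def OnMetaBand (R : Set (Word S)) (x : Word S) : Prop :=
  (∃ u, IsBridge S x u x ∧ u ≠ []) ∨
  (∃ y, y ≠ x ∧ y ∈ R ∧ Reach S R x y ∧ Reach S R y x)

/-- A meta-`⋃`-cyclic string algebra: each connected component of the bridge quiver has at
least two vertices and is a union of meta-bands (every vertex and every arrow lies on a
directed cycle of positive length). -/
def MetaUCyclic (R : Set (Word S)) : Prop :=
  (∀ x ∈ R, ∃ y ∈ R, y ≠ x ∧ SameComp S R x y) ∧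
  (∀ x ∈ R, OnMetaBand S R x) ∧
  (∀ x y u, x ∈ R → y ∈ R → IsBridge S x u y → Reach S R y x)

/-- A meta-torsion-free string algebra: each connected component of the bridge quiver has
at least two vertices, and every finite directed path of positive length extends to a
`ℤ`-indexed directed path. -/
def MetaTorsionFree (R : Set (Word S)) : Prop :=
  (∀ x ∈ R, ∃ y ∈ R, y ≠ x ∧ SameComp S R x y) ∧
  (∀ (n : ℕ) (c e : ℕ → Word S), 0 < n → (∀ i ≤ n, c i ∈ R) →
    (∀ i < n, IsBridge S (c i) (e i) (c (i + 1))) →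
    ∃ (g d : ℤ → Word S), (∀ i : ℤ, g i ∈ R) ∧
      (∀ i : ℤ, IsBridge S (g i) (d i) (g (i + 1))) ∧
      (∀ i : ℕ, i ≤ n → g (i : ℤ) = c i) ∧ (∀ i : ℕ, i < n → d (i : ℤ) = e i))

/-- A non-domestic string algebra: one with infinitely many bands. -/
def NonDomestic : Prop := ¬ {b : Word S | IsBand S b}.Finite

end SA

/-! ### Auxiliary lemmas for the proof -/

namespace SA

open List

variable {S : SAQuiver}

theorem exists_head?_of_ne_nil {α : Type*} {l : List α} (h : l ≠ []) :
    ∃ a, l.head? = some a := by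
  cases l with
  | nil => exact absurd rfl h
  | cons a t => exact ⟨a, rfl⟩

theorem exists_getLast?_of_ne_nil {α : Type*} {l : List α} (h : l ≠ []) :
    ∃ a, l.getLast? = some a := by
  have := List.getLast?_isSome.mpr h
  exact Option.isSome_iff_exists.mp this

theorem head?_append_of_ne_nil {α : Type*} (l l' : List α) (h : l ≠ []) :
    (l ++ l').head? = l.head? := by
  obtain ⟨a, ha⟩ := exists_head?_of_ne_nil h
  rw [List.head?_append, ha]; rfl

theorem getLast?_append_of_ne_nil {α : Type*} (l l' : List α) (h : l' ≠ []) :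
    (l ++ l').getLast? = l'.getLast? := by
  obtain ⟨a, ha⟩ := exists_getLast?_of_ne_nil h
  rw [List.getLast?_append, ha]; rfl

theorem mem_of_head?_eq_some {α : Type*} {l : List α} {a : α} (h : l.head? = some a) :
    a ∈ l := by
  cases l with
  | nil => simp at h
  | cons b t => simp at h; subst h; exact List.mem_cons_self

theorem mem_of_getLast?_eq_some {α : Type*} {l : List α} {a : α} (h : l.getLast? = some a) :
    a ∈ l := by
  rw [List.getLast?_eq_getElem?] at h
  exact List.mem_of_getElem? h

/-- Decompose an infix of an append. -/
theorem infix_append_split {α : Type*} {d u v : List α} (h : d <:+: u ++ v) :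
    d <:+: u ∨ d <:+: v ∨
      ∃ d1 d2, d = d1 ++ d2 ∧ d1 ≠ [] ∧ d2 ≠ [] ∧ d1 <:+ u ∧ d2 <+: v := by
  obtain ⟨s, t, hst⟩ := h
  rcases le_or_gt u.length s.length with hle | hlt
  · -- the infix lies in `v`
    have hsp : s <+: u ++ v := ⟨d ++ t, by simpa [List.append_assoc] using hst⟩
    have hup : u <+: u ++ v := ⟨v, rfl⟩
    obtain ⟨s', rfl⟩ := List.prefix_of_prefix_length_le hup hsp hle
    right; left
    refine ⟨s', t, ?_⟩
    have h2 : u ++ (s' ++ (d ++ t)) = u ++ v := by simpa [List.append_assoc] using hst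
    have := List.append_cancel_left h2
    simpa [List.append_assoc] using this
  · rcases le_or_gt (s.length + d.length) u.length with hle2 | hlt2
    · -- the infix lies in `u`
      have hsp : s ++ d <+: u ++ v := ⟨t, by simpa [List.append_assoc] using hst⟩
      have hup : u <+: u ++ v := ⟨v, rfl⟩
      obtain ⟨t', ht'⟩ := List.prefix_of_prefix_length_le hsp hup (by simpa using hle2)
      exact Or.inl ⟨s, t', by simpa [List.append_assoc] using ht'⟩
    · right; right
      set k := u.length - s.length with hk
      have hk1 : 0 < k := by omega
      have hk2 : k < d.length := by omega
      have hst' : (s ++ d.take k) ++ (d.drop k ++ t) = u ++ v := by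
        have h1 : (s ++ d.take k) ++ (d.drop k ++ t) = s ++ (d.take k ++ d.drop k) ++ t := by
          simp only [List.append_assoc]
        rw [h1, List.take_append_drop]
        exact hst
      have hpre : s ++ d.take k <+: u ++ v := ⟨d.drop k ++ t, hst'⟩
      have hup : u <+: u ++ v := ⟨v, rfl⟩
      have hlen : (s ++ d.take k).length = u.length := by
        rw [List.length_append, List.length_take]; omega
      have hpre2 : s ++ d.take k <+: u :=
        List.prefix_of_prefix_length_le hpre hup (by omega)
      have hequ : s ++ d.take k = u := hpre2.eq_of_length hlen
      refine ⟨d.take k, d.drop k, (List.take_append_drop k d).symm, ?_, ?_, ⟨s, hequ⟩, ?_⟩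
      · exact List.length_pos_iff.mp (by rw [List.length_take]; exact lt_min hk1 (by omega))
      · exact List.length_pos_iff.mp (by rw [List.length_drop]; omega)
      · -- d.drop k <+: v
        refine ⟨t, ?_⟩
        rw [hequ] at hst'
        exact List.append_cancel_left hst'

theorem isWalk_iff_chain' : ∀ w : Word S,
    IsWalk S w ↔ w.Chain' (fun x y => sylTgt S x = sylSrc S y)
  | [] => by simp [IsWalk, List.Chain']
  | [x] => by simp [IsWalk, List.Chain']
  | x :: y :: l => by
      rw [show List.Chain' _ (x :: y :: l) ↔ _ ∧ List.Chain' _ (y :: l) from List.isChain_cons_cons, ← isWalk_iff_chain' (y :: l)]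
      simp [IsWalk]

theorem reduced_iff_chain' : ∀ w : Word S,
    Reduced S w ↔ w.Chain' (fun x y => y ≠ sylInv S x)
  | [] => by simp [Reduced, List.Chain']
  | [x] => by simp [Reduced, List.Chain']
  | x :: y :: l => by
      rw [show List.Chain' _ (x :: y :: l) ↔ _ ∧ List.Chain' _ (y :: l) from List.isChain_cons_cons, ← reduced_iff_chain' (y :: l)]
      simp [Reduced]

theorem avoidsRel_infix {w d : Word S} (h : AvoidsRel S w) (hd : d <:+: w) :
    AvoidsRel S d :=
  fun p hp => ⟨fun hc => (h p hp).1 (hc.trans hd), fun hc => (h p hp).2 (hc.trans hd)⟩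

theorem isStr_infix {w d : Word S} (h : IsStr S w) (hd : d <:+: w) (hne : d ≠ []) :
    IsStr S d :=
  ⟨hne, (isWalk_iff_chain' d).2 (((isWalk_iff_chain' w).1 h.2.1).infix hd),
   (reduced_iff_chain' d).2 (((reduced_iff_chain' w).1 h.2.2.1).infix hd),
   avoidsRel_infix h.2.2.2 hd⟩

/-! #### Powers -/

theorem pow_zero (w : Word S) : pow S w 0 = [] := rfl

theorem pow_succ (w : Word S) (n : ℕ) : pow S w (n + 1) = w ++ pow S w n := by
  simp [pow, List.replicate_succ]

theorem pow_one (w : Word S) : pow S w 1 = w := by simp [pow]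

theorem pow_nil (k : ℕ) : pow S ([] : Word S) k = [] := by
  induction k with
  | zero => rfl
  | succ k ih => rw [pow_succ, ih]; rfl

theorem pow_add (w : Word S) (a b : ℕ) :
    pow S w (a + b) = pow S w a ++ pow S w b := by
  induction a with
  | zero => simp [pow_zero]
  | succ k ih =>
      have h : k + 1 + b = (k + b) + 1 := by omega
      rw [h, pow_succ, ih, pow_succ, List.append_assoc]

theorem length_pow (w : Word S) (n : ℕ) : (pow S w n).length = n * w.length := by
  simp [pow, List.length_flatten, List.map_replicate, List.sum_replicate, smul_eq_mul]

theorem pow_ne_nil {w : Word S} (h : w ≠ []) {n : ℕ} (hn : 1 ≤ n) :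
    pow S w n ≠ [] :=
  List.length_pos_iff.mp (by
    rw [length_pow]
    exact Nat.mul_pos hn (List.length_pos_iff.mpr h))

theorem pow_head? {w : Word S} (h : w ≠ []) {n : ℕ} (hn : 1 ≤ n) :
    (pow S w n).head? = w.head? := by
  obtain ⟨k, rfl⟩ : ∃ k, n = k + 1 := ⟨n - 1, by omega⟩
  rw [pow_succ, head?_append_of_ne_nil _ _ h]

theorem pow_getLast? {w : Word S} (h : w ≠ []) {n : ℕ} (hn : 1 ≤ n) :
    (pow S w n).getLast? = w.getLast? := by
  obtain ⟨k, rfl⟩ : ∃ k, n = k + 1 := ⟨n - 1, by omega⟩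
  rw [pow_add, pow_one, getLast?_append_of_ne_nil _ _ h]

theorem pow_pow (u : Word S) (k n : ℕ) :
    pow S (pow S u k) n = pow S u (k * n) := by
  induction n with
  | zero => simp [pow_zero]
  | succ n ih =>
      have h : k * (n + 1) = k + k * n := by ring
      rw [pow_succ, ih, h, pow_add]

theorem infix_pow_head {c d : Word S} {hb : Syl S} (hh : c.head? = some hb)
    (hd : d ≠ []) (hav : ∀ x ∈ d, x ≠ hb) :
    ∀ n, d <:+: pow S c n → d <:+: c := by
  intro n
  induction n with
  | zero =>
      intro h
      rw [pow_zero, List.infix_nil] at h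
      exact absurd h hd
  | succ n ih =>
      intro h
      rw [pow_succ] at h
      rcases infix_append_split h with h1 | h1 | ⟨d1, d2, rfl, hd1, hd2, hs, hp⟩
      · exact h1
      · exact ih h1
      · exfalso
        have hpn : pow S c n ≠ [] := by
          rintro hnil
          rw [hnil, List.prefix_nil] at hp
          exact hd2 hp
        have hn1 : 1 ≤ n := by
          rcases Nat.eq_zero_or_pos n with rfl | h'
          · exact absurd (pow_zero c) hpn
          · exact h'
        have hcne : c ≠ [] := by rintro rfl; simp at hh
        obtain ⟨e, he⟩ := exists_head?_of_ne_nil hd2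
        have heq : (pow S c n).head? = some e := by
          obtain ⟨t, ht⟩ := hp
          rw [← ht, head?_append_of_ne_nil _ _ hd2, he]
        rw [pow_head? hcne hn1, hh] at heq
        have : e = hb := by injection heq.symm
        exact hav e (List.mem_append_right d1 (mem_of_head?_eq_some he)) this

theorem infix_pow_last {c d : Word S} {hl : Syl S} (hlast : c.getLast? = some hl)
    (hd : d ≠ []) (hav : ∀ x ∈ d, x ≠ hl) :
    ∀ n, d <:+: pow S c n → d <:+: c := by
  intro n
  induction n with
  | zero =>
      intro h
      rw [pow_zero, List.infix_nil] at h
      exact absurd h hd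
  | succ n ih =>
      intro h
      rw [pow_succ] at h
      rcases infix_append_split h with h1 | h1 | ⟨d1, d2, rfl, hd1, hd2, hs, hp⟩
      · exact h1
      · exact ih h1
      · exfalso
        obtain ⟨e, he⟩ := exists_getLast?_of_ne_nil hd1
        have heq : c.getLast? = some e := by
          obtain ⟨t, ht⟩ := hs
          rw [← ht, getLast?_append_of_ne_nil _ _ hd1, he]
        rw [hlast] at heq
        have : e = hl := by injection heq.symm
        exact hav e (List.mem_append_left d2 (mem_of_getLast?_eq_some he)) this

theorem chain'_pow {R : Syl S → Syl S → Prop} {c : Word S} {x y : Syl S}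
    (hc : c.Chain' R) (hx : c.getLast? = some x) (hy : c.head? = some y) (hR : R x y) :
    ∀ n, (pow S c n).Chain' R := by
  intro n
  induction n with
  | zero => simp [pow_zero, List.Chain']
  | succ n ih =>
      rw [pow_succ]
      refine List.isChain_append.mpr ⟨hc, ih, ?_⟩
      intro a ha b hb
      rcases Nat.eq_zero_or_pos n with rfl | hn
      · rw [pow_zero] at hb; simp at hb
      · have hcne : c ≠ [] := by rintro rfl; simp at hy
        rw [pow_head? hcne hn, hy] at hb
        rw [hx] at ha
        simp only [Option.mem_def, Option.some.injEq] at ha hb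
        subst ha; subst hb
        exact hR

/-- The key closure lemma: a string which is cyclic with inverse head and direct last
syllable, such that the "seam" pair is compatible, has all its powers strings. -/
theorem isStr_pow (hrel : ∀ p ∈ S.rel, p ≠ []) {c : Word S} {a b : S.A}
    (hs : IsStr S c) (hhead : c.head? = some (Sum.inr b)) (hlast : c.getLast? = some (Sum.inl a))
    (hw : S.tgt a = S.tgt b) (hne : b ≠ a) : ∀ n, 1 ≤ n → IsStr S (pow S c n) := by
  intro n hn
  have hcne : c ≠ [] := hs.1
  refine ⟨pow_ne_nil hcne hn, ?_, ?_, ?_⟩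
  · exact (isWalk_iff_chain' _).2 <| chain'_pow ((isWalk_iff_chain' c).1 hs.2.1)
      hlast hhead (by simpa [sylTgt, sylSrc] using hw) n
  · exact (reduced_iff_chain' _).2 <| chain'_pow ((reduced_iff_chain' c).1 hs.2.2.1)
      hlast hhead (by simp [sylInv, hne]) n
  · intro p hp
    constructor
    · intro hcon
      have hpne : (p.map (Sum.inl : S.A → Syl S)) ≠ [] := by
        simpa using hrel p hp
      have hav : ∀ x ∈ p.map (Sum.inl : S.A → Syl S), x ≠ Sum.inr b := by
        intro x hx
        obtain ⟨q, hq, rfl⟩ := List.mem_map.mp hx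
        simp
      exact (hs.2.2.2 p hp).1 (infix_pow_head hhead hpne hav n hcon)
    · intro hcon
      have hpne : ((p.map (Sum.inr : S.A → Syl S)).reverse) ≠ [] := by
        simpa using hrel p hp
      have hav : ∀ x ∈ (p.map (Sum.inr : S.A → Syl S)).reverse, x ≠ Sum.inl a := by
        intro x hx
        rw [List.mem_reverse] at hx
        obtain ⟨q, hq, rfl⟩ := List.mem_map.mp hx
        simp
      exact (hs.2.2.2 p hp).2 (infix_pow_last hlast hpne hav n hcon)

theorem wSrc_eq_head (w : Word S) : wSrc S w = w.head?.map (sylSrc S) := by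
  cases w <;> rfl

theorem wTgt_eq_getLast (w : Word S) : wTgt S w = w.getLast?.map (sylTgt S) := rfl

theorem flatten_replicate_flatten (k : ℕ) (ps : List (Word S)) :
    ((List.replicate k ps).flatten).flatten = pow S ps.flatten k := by
  induction k with
  | zero => rfl
  | succ k ih =>
      rw [List.replicate_succ, List.flatten_cons, List.flatten_append, ih, pow_succ]

/-- Any cyclic string with inverse head and direct last syllable, all of whose powers
are strings, decomposes as a concatenation of bands. -/
theorem band_decomp (c : Word S) (hne : c ≠ [])
    (hpows : ∀ n, 1 ≤ n → IsStr S (pow S c n)) (hcyc : Cyclic S c)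
    (hh : ∃ b, c.head? = some (Sum.inr b)) (hl : ∃ a, c.getLast? = some (Sum.inl a)) :
    ∃ parts : List (Word S), parts ≠ [] ∧ c = parts.flatten ∧ ∀ p ∈ parts, IsBand S p := by
  by_cases hprim : Primitive S c
  · refine ⟨[c], by simp, by simp, ?_⟩
    intro p hp
    have hpc : p = c := by simpa using hp
    subst hpc
    exact ⟨by simpa [pow_one] using hpows 1 le_rfl, hcyc, hprim, hh, hl,
      fun n hn => hpows n hn⟩
  · rw [Primitive, not_not] at hprim
    obtain ⟨u, k, hk2, hcu⟩ := hprim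
    have hune : u ≠ [] := by
      rintro rfl
      exact hne (by rw [hcu, pow_nil])
    have hk1 : 1 ≤ k := by omega
    have hulen : u.length < c.length := by
      have hlc := congrArg List.length hcu
      rw [length_pow] at hlc
      have hu0 : 0 < u.length := List.length_pos_iff.mpr hune
      have h2 : 2 * u.length ≤ k * u.length := Nat.mul_le_mul_right _ (by omega)
      omega
    have hhead : (pow S u k).head? = u.head? := pow_head? hune hk1
    have hlastq : (pow S u k).getLast? = u.getLast? := pow_getLast? hune hk1
    have hupows : ∀ n, 1 ≤ n → IsStr S (pow S u n) := by
      intro n hn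
      have h1 := hpows n hn
      rw [hcu, pow_pow] at h1
      have hsplit : pow S u (k * n) = pow S u n ++ pow S u (k * n - n) := by
        rw [← pow_add]
        congr 1
        have : n ≤ k * n := Nat.le_mul_of_pos_left n (by omega)
        omega
      rw [hsplit] at h1
      exact isStr_infix h1 ⟨[], pow S u (k * n - n), by simp⟩ (pow_ne_nil hune hn)
    have hucyc : Cyclic S u := by
      refine ⟨hune, ?_⟩
      have hs1 : wSrc S u = wSrc S c := by
        rw [wSrc_eq_head, wSrc_eq_head, hcu, hhead]
      have ht1 : wTgt S u = wTgt S c := by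
        rw [wTgt_eq_getLast, wTgt_eq_getLast, hcu, hlastq]
      rw [hs1, ht1]
      exact hcyc.2
    have hh' : ∃ b, u.head? = some (Sum.inr b) := by
      obtain ⟨b, hb⟩ := hh
      exact ⟨b, by rw [← hhead, ← hcu]; exact hb⟩
    have hl' : ∃ a, u.getLast? = some (Sum.inl a) := by
      obtain ⟨a, ha⟩ := hl
      exact ⟨a, by rw [← hlastq, ← hcu]; exact ha⟩
    obtain ⟨parts, p1, p2, p3⟩ := band_decomp u hune hupows hucyc hh' hl'
    refine ⟨(List.replicate k parts).flatten, ?_, ?_, ?_⟩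
    · obtain ⟨k', rfl⟩ : ∃ k', k = k' + 1 := ⟨k - 1, by omega⟩
      rw [List.replicate_succ, List.flatten_cons]
      intro h0
      exact p1 (List.append_eq_nil_iff.mp h0).1
    · rw [flatten_replicate_flatten, ← p2, ← hcu]
    · intro p hp
      rw [List.mem_flatten] at hp
      obtain ⟨l, hl1, hl2⟩ := hp
      rw [List.eq_of_mem_replicate hl1] at hl2
      exact p3 p hl2
termination_by c.length
decreasing_by exact hulen

/-- Decomposition of a word with inverse head and direct last syllable into
"units", each an inverse run followed by a direct run. -/
theorem units_exist (w : Word S) (hwne : w ≠ [])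
    (hh : ∃ b, w.head? = some (Sum.inr b)) (hl : ∃ a, w.getLast? = some (Sum.inl a)) :
    ∃ units : List (Word S), units ≠ [] ∧ w = units.flatten ∧
      ∀ u ∈ units, ∃ x y, u = x ++ y ∧ x ≠ [] ∧ y ≠ [] ∧
        InverseWord S x ∧ DirectWord S y := by
  obtain ⟨b, hb⟩ := hh
  obtain ⟨a, ha⟩ := hl
  have hxr1 : w.takeWhile Sum.isRight ++ w.dropWhile Sum.isRight = w :=
    List.takeWhile_append_dropWhile
  have hxne : w.takeWhile Sum.isRight ≠ [] := by
    obtain ⟨t, ht⟩ : ∃ t, w = Sum.inr b :: t := by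
      cases w with
      | nil => simp at hb
      | cons s t =>
          simp only [List.head?_cons, Option.some.injEq] at hb
          exact ⟨t, by rw [hb]⟩
    rw [ht, List.takeWhile_cons_of_pos (by simp)]
    simp
  have hxinv : InverseWord S (w.takeWhile Sum.isRight) := by
    intro s hs
    have hs' := List.mem_takeWhile_imp hs
    cases s with
    | inl a' => simp at hs'
    | inr a' => exact ⟨a', rfl⟩
  have hr1ne : w.dropWhile Sum.isRight ≠ [] := by
    intro h0
    rw [h0, List.append_nil] at hxr1
    have hmem : Sum.inl a ∈ w.takeWhile Sum.isRight := by
      rw [hxr1]; exact mem_of_getLast?_eq_some ha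
    obtain ⟨a', ha'⟩ := hxinv _ hmem
    simp at ha'
  have hr1head := List.head_dropWhile_not Sum.isRight hr1ne
  have hyne : (w.dropWhile Sum.isRight).takeWhile Sum.isLeft ≠ [] := by
    obtain ⟨c0, t1, hr1eq⟩ : ∃ c0 t1, w.dropWhile Sum.isRight = Sum.inl c0 :: t1 := by
      have hcons := (List.cons_head_tail hr1ne).symm
      rcases hhd : (w.dropWhile Sum.isRight).head hr1ne with c0 | c0
      · exact ⟨c0, _, by rw [hcons, hhd]⟩
      · rw [hhd] at hr1head; simp at hr1head
    rw [hr1eq, List.takeWhile_cons_of_pos (by simp)]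
    simp
  have hydir : DirectWord S ((w.dropWhile Sum.isRight).takeWhile Sum.isLeft) := by
    intro s hs
    have hs' := List.mem_takeWhile_imp hs
    cases s with
    | inl a' => exact ⟨a', rfl⟩
    | inr a' => simp at hs'
  have hyr2 : (w.dropWhile Sum.isRight).takeWhile Sum.isLeft ++
      (w.dropWhile Sum.isRight).dropWhile Sum.isLeft = w.dropWhile Sum.isRight :=
    List.takeWhile_append_dropWhile
  set x := w.takeWhile Sum.isRight with hxdef
  set y := (w.dropWhile Sum.isRight).takeWhile Sum.isLeft with hydef
  set r2 := (w.dropWhile Sum.isRight).dropWhile Sum.isLeft with hr2def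
  have hw : w = (x ++ y) ++ r2 := by
    rw [List.append_assoc, hyr2, hxr1]
  by_cases hr2 : r2 = []
  · refine ⟨[x ++ y], by simp, ?_, ?_⟩
    · rw [hw, hr2, List.append_nil]; simp
    · intro u hu
      have hueq : u = x ++ y := by simpa using hu
      subst hueq
      exact ⟨x, y, rfl, hxne, hyne, hxinv, hydir⟩
  · have hr2head := List.head_dropWhile_not Sum.isLeft hr2
    obtain ⟨b2, hb2⟩ : ∃ b2, r2.head? = some (Sum.inr b2) := by
      have hcons := (List.cons_head_tail hr2).symm
      rcases hhd : r2.head hr2 with c | c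
      · rw [hhd] at hr2head; simp at hr2head
      · exact ⟨c, by rw [hcons, hhd]; rfl⟩
    have hr2last : r2.getLast? = some (Sum.inl a) := by
      rw [hw] at ha
      rwa [getLast?_append_of_ne_nil _ _ hr2] at ha
    have hlt : r2.length < w.length := by
      have hx0 := List.length_pos_iff.mpr hxne
      have hlen := congrArg List.length hw
      rw [List.length_append, List.length_append] at hlen
      omega
    obtain ⟨units2, hu1, hu2, hu3⟩ := units_exist r2 hr2 ⟨b2, hb2⟩ ⟨a, hr2last⟩
    refine ⟨(x ++ y) :: units2, by simp, ?_, ?_⟩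
    · rw [List.flatten_cons, ← hu2, hw]
    · intro u hu
      rcases List.mem_cons.mp hu with rfl | hu'
      · exact ⟨x, y, rfl, hxne, hyne, hxinv, hydir⟩
      · exact hu3 u hu'
termination_by w.length
decreasing_by exact hlt

theorem directWord_exists {d : Word S} (h : DirectWord S d) :
    ∃ p : List S.A, d = p.map Sum.inl := by
  induction d with
  | nil => exact ⟨[], rfl⟩
  | cons s t ih =>
      obtain ⟨a, rfl⟩ := h s List.mem_cons_self
      obtain ⟨p, hp⟩ := ih (fun x hx => h x (List.mem_cons_of_mem _ hx))
      exact ⟨a :: p, by rw [List.map_cons, ← hp]⟩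

theorem inverseWord_exists {d : Word S} (h : InverseWord S d) :
    ∃ p : List S.A, d = p.map Sum.inr := by
  induction d with
  | nil => exact ⟨[], rfl⟩
  | cons s t ih =>
      obtain ⟨a, rfl⟩ := h s List.mem_cons_self
      obtain ⟨p, hp⟩ := ih (fun x hx => h x (List.mem_cons_of_mem _ hx))
      exact ⟨a :: p, by rw [List.map_cons, ← hp]⟩

/-- Any homogeneous (direct or inverse) nonempty infix of a string has length at most
the bound `m` on direct strings. -/
theorem run_bound {m : ℕ}
    (hm : ∀ p : List S.A, p ≠ [] → IsWalk S (p.map Sum.inl) →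
      (∀ q ∈ S.rel, ¬ q <:+: p) → p.length ≤ m)
    {w d : Word S} (hstr : IsStr S w) (hd : d <:+: w) (hne : d ≠ [])
    (hdi : DirectWord S d ∨ InverseWord S d) : d.length ≤ m := by
  have hds := isStr_infix hstr hd hne
  rcases hdi with hdir | hinv
  · obtain ⟨p, rfl⟩ := directWord_exists hdir
    have hpne : p ≠ [] := by rintro rfl; simp at hne
    have hrels : ∀ q ∈ S.rel, ¬ q <:+: p := by
      intro q hq hcon
      exact (hds.2.2.2 q hq).1 (hcon.map _)
    have := hm p hpne hds.2.1 hrels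
    simpa using this
  · obtain ⟨p, rfl⟩ := inverseWord_exists hinv
    have hpne : p.reverse ≠ [] := by
      intro h0
      rw [List.reverse_eq_nil_iff] at h0
      subst h0
      simp at hne
    have hwalk : IsWalk S (p.reverse.map Sum.inl) := by
      rw [isWalk_iff_chain']
      simp only [List.Chain']
      rw [List.isChain_map, List.isChain_reverse]
      have h1 := (isWalk_iff_chain' (p.map (Sum.inr : S.A → Syl S))).1 hds.2.1
      simp only [List.Chain'] at h1
      rw [List.isChain_map] at h1
      exact h1.imp fun a b hab => by
        simpa [Function.flip_def, sylTgt, sylSrc] using hab.symm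
    have hrels : ∀ q ∈ S.rel, ¬ q <:+: p.reverse := by
      intro q hq hcon
      have h2 : q.reverse <:+: p := by
        have := List.reverse_infix.mpr hcon
        simpa using this
      have h3 : (q.map (Sum.inr : S.A → Syl S)).reverse <:+: p.map Sum.inr := by
        rw [← List.map_reverse]
        exact h2.map _
      exact (hds.2.2.2 q hq).2 h3
    have := hm p.reverse hpne hwalk hrels
    simpa using this

theorem flatten_head? {ls : List (Word S)} {u : Word S} (h : ls.head? = some u)
    (hu : u ≠ []) : ls.flatten.head? = u.head? := by
  cases ls with
  | nil => simp at h
  | cons v t =>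
      simp only [List.head?_cons, Option.some.injEq] at h
      subst h
      rw [List.flatten_cons, head?_append_of_ne_nil _ _ hu]

theorem flatten_getLast? {ls : List (Word S)} :
    ∀ {u : Word S}, ls.getLast? = some u → u ≠ [] → ls.flatten.getLast? = u.getLast? := by
  induction ls with
  | nil => intro u h _; simp at h
  | cons v t ih =>
      intro u h hu
      cases t with
      | nil =>
          simp only [List.getLast?_singleton, Option.some.injEq] at h
          subst h
          simp
      | cons v2 t2 =>
          rw [List.getLast?_cons_cons] at h
          have h2 := ih h hu
          have hne2 : (v2 :: t2).flatten ≠ [] := by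
            intro h0
            rw [h0] at h2
            obtain ⟨z, hz⟩ := exists_getLast?_of_ne_nil hu
            rw [hz] at h2
            simp at h2
          rw [List.flatten_cons, getLast?_append_of_ne_nil _ _ hne2, h2]

theorem exists_eq_append_getLast? {α : Type*} {l : List α} {x : α}
    (h : l.getLast? = some x) : ∃ l', l = l' ++ [x] := by
  have h2 : l.reverse.head? = some x := by rw [List.head?_reverse, h]
  obtain ⟨t, ht⟩ : ∃ t, l.reverse = x :: t := by
    cases hr : l.reverse with
    | nil => rw [hr] at h2; simp at h2
    | cons y t =>
        rw [hr] at h2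
        simp only [List.head?_cons, Option.some.injEq] at h2
        exact ⟨t, by rw [h2]⟩
  refine ⟨t.reverse, ?_⟩
  have h3 := congrArg List.reverse ht
  simpa using h3

theorem exists_eq_cons_head? {α : Type*} {l : List α} {x : α}
    (h : l.head? = some x) : ∃ l', l = x :: l' := by
  cases l with
  | nil => simp at h
  | cons y t =>
      simp only [List.head?_cons, Option.some.injEq] at h
      exact ⟨t, by rw [h]⟩

/-- The arrow of the last syllable, assuming it is direct. -/
def lastArr (S : SAQuiver) (d : S.A) (u : Word S) : S.A :=
  match u.getLast? with
  | some (Sum.inl a) => a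
  | _ => d

/-- The arrow of the first syllable, assuming it is inverse. -/
def headArr (S : SAQuiver) (d : S.A) (u : Word S) : S.A :=
  match u.head? with
  | some (Sum.inr b) => b
  | _ => d

theorem lastArr_eq {d a : S.A} {u : Word S} (h : u.getLast? = some (Sum.inl a)) :
    lastArr S d u = a := by
  unfold lastArr
  rw [h]

theorem headArr_eq {d b : S.A} {u : Word S} (h : u.head? = some (Sum.inr b)) :
    headArr S d u = b := by
  unfold headArr
  rw [h]

/-- The main bound: a prime band has length at most `2(m+1)·|A|²`. -/
theorem prime_band_length_le {m : ℕ}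
    (hrelne : ∀ p ∈ S.rel, p ≠ [])
    (hm : ∀ p : List S.A, p ≠ [] → IsWalk S (p.map Sum.inl) →
      (∀ q ∈ S.rel, ¬ q <:+: p) → p.length ≤ m)
    [Fintype S.A]
    {w : Word S} (hw : IsPrimeBand S w) :
    w.length ≤ 2 * (m + 1) * (Fintype.card S.A * Fintype.card S.A) := by
  obtain ⟨hband, hnotdec⟩ := hw
  obtain ⟨hstr, hcyc, hprim, ⟨b0, hhead0⟩, ⟨a0, hlast0⟩, hpows⟩ := hband
  obtain ⟨units, hune, hflat, hunits⟩ := units_exist w hstr.1 ⟨b0, hhead0⟩ ⟨a0, hlast0⟩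
  have hq0 : 0 < units.length := List.length_pos_iff.mpr hune
  have hmem_ne : ∀ u ∈ units, u ≠ [] := by
    intro u hu
    obtain ⟨x, y, rfl, hx, hy, _, _⟩ := hunits u hu
    intro h0
    exact hx (List.append_eq_nil_iff.mp h0).1
  have hmem_head : ∀ u ∈ units, ∃ bu, u.head? = some (Sum.inr bu) := by
    intro u hu
    obtain ⟨x, y, rfl, hx, hy, hxi, _⟩ := hunits u hu
    obtain ⟨s, hs⟩ := exists_head?_of_ne_nil hx
    obtain ⟨bu, rfl⟩ := hxi s (mem_of_head?_eq_some hs)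
    exact ⟨bu, by rw [head?_append_of_ne_nil _ _ hx, hs]⟩
  have hmem_last : ∀ u ∈ units, ∃ au, u.getLast? = some (Sum.inl au) := by
    intro u hu
    obtain ⟨x, y, rfl, hx, hy, _, hyd⟩ := hunits u hu
    obtain ⟨s, hs⟩ := exists_getLast?_of_ne_nil hy
    obtain ⟨au, rfl⟩ := hyd s (mem_of_getLast?_eq_some hs)
    exact ⟨au, by rw [getLast?_append_of_ne_nil _ _ hy, hs]⟩
  have hunit_len : ∀ u ∈ units, u.length ≤ 2 * (m + 1) := by
    intro u hu
    obtain ⟨x, y, rfl, hx, hy, hxi, hyd⟩ := hunits u hu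
    have hinfix : (x ++ y) <:+: w := hflat ▸ List.infix_of_mem_flatten hu
    have hxb : x.length ≤ m :=
      run_bound hm hstr ((List.IsPrefix.isInfix ⟨y, rfl⟩).trans hinfix) hx (Or.inr hxi)
    have hyb : y.length ≤ m :=
      run_bound hm hstr ((List.IsSuffix.isInfix ⟨x, rfl⟩).trans hinfix) hy (Or.inl hyd)
    rw [List.length_append]
    omega
  have hwlen : w.length ≤ units.length * (2 * (m + 1)) := by
    rw [hflat, List.length_flatten]
    have h1 := List.sum_le_card_nsmul (units.map List.length) (2 * (m + 1)) (by
      intro x hx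
      obtain ⟨u, hu, rfl⟩ := List.mem_map.mp hx
      exact hunit_len u hu)
    simpa [smul_eq_mul] using h1
  by_contra hcon
  push_neg at hcon
  have hqn : Fintype.card S.A * Fintype.card S.A < units.length := by
    have h1 : 2 * (m + 1) * (Fintype.card S.A * Fintype.card S.A) <
        units.length * (2 * (m + 1)) := lt_of_lt_of_le hcon hwlen
    rw [mul_comm units.length] at h1
    exact Nat.lt_of_mul_lt_mul_left h1
  set f : Fin units.length → S.A × S.A := fun i =>
    (lastArr S b0 (units[(i : ℕ)]'i.isLt),
     headArr S b0 (units[((i : ℕ) + 1) % units.length]'(Nat.mod_lt _ hq0))) with hfdef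
  have hcard : Fintype.card (S.A × S.A) < Fintype.card (Fin units.length) := by
    rw [Fintype.card_fin, Fintype.card_prod]
    exact hqn
  obtain ⟨i0, j0, hij0, hf0⟩ := Fintype.exists_ne_map_eq_of_card_lt f hcard
  have key : ∀ i j : Fin units.length, (i : ℕ) < (j : ℕ) → f i = f j → False := by
    intro i j hlt hf
    have hiq : (i : ℕ) < units.length := i.isLt
    have hjq : (j : ℕ) < units.length := j.isLt
    have hi1 : (i : ℕ) + 1 < units.length := by omega
    simp only [hfdef, Prod.mk.injEq] at hf
    obtain ⟨hf1, hf2⟩ := hf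
    have hmodi : ((i : ℕ) + 1) % units.length = (i : ℕ) + 1 := Nat.mod_eq_of_lt hi1
    simp only [hmodi] at hf2
    obtain ⟨a, ha_last⟩ := hmem_last _ (List.getElem_mem hjq)
    obtain ⟨b, hb_head⟩ := hmem_head _ (List.getElem_mem hi1)
    obtain ⟨a2, ha2_last⟩ := hmem_last _ (List.getElem_mem hiq)
    obtain ⟨b2, hb2_head⟩ :=
      hmem_head _ (List.getElem_mem (Nat.mod_lt ((j : ℕ) + 1) hq0))
    rw [lastArr_eq ha2_last, lastArr_eq ha_last] at hf1
    subst hf1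
    rw [headArr_eq hb_head, headArr_eq hb2_head] at hf2
    subst hf2
    -- basic nonemptiness
    have hdropne : units.drop ((i : ℕ) + 1) ≠ [] :=
      List.length_pos_iff.mp (by rw [List.length_drop]; omega)
    have htakene : units.take ((i : ℕ) + 1) ≠ [] :=
      List.length_pos_iff.mp (by
        rw [List.length_take]
        exact lt_min (Nat.succ_pos _) hq0)
    set T := (units.take ((i : ℕ) + 1)).flatten with hT
    set D := (units.drop ((i : ℕ) + 1)).flatten with hD
    have hTD : w = T ++ D := by
      rw [hflat, hT, hD, ← List.flatten_append, List.take_append_drop]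
    set L := units.drop ((i : ℕ) + 1) ++ units.take ((i : ℕ) + 1) with hL
    have hLlen : L.length = units.length := by
      rw [hL, List.length_append, List.length_drop, List.length_take,
        min_eq_left (by omega : (i : ℕ) + 1 ≤ units.length)]
      omega
    set w' := L.flatten with hw'
    have hw'DT : w' = D ++ T := by rw [hw', hL, List.flatten_append]
    set k := (j : ℕ) - (i : ℕ) with hk
    have hk0 : 0 < k := by omega
    have hkq : k < units.length := by omega
    -- head and last of the two pieces of L
    have hHtake : (L.take k).head? = some (units[(i : ℕ) + 1]'hi1) := by
      rw [List.head?_eq_getElem?, List.getElem?_take, if_pos hk0, hL, List.getElem?_append,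
        if_pos (by rw [List.length_drop]; omega), List.getElem?_drop]
      simp only [Nat.add_zero]
      exact List.getElem?_eq_getElem hi1
    have hHtakeLast : (L.take k).getLast? = some (units[(j : ℕ)]'hjq) := by
      have hlen : (L.take k).length = k := by
        rw [List.length_take, min_eq_left (by omega : k ≤ L.length)]
      rw [List.getLast?_eq_getElem?, hlen, List.getElem?_take,
        if_pos (by omega : k - 1 < k), hL, List.getElem?_append,
        if_pos (by rw [List.length_drop]; omega), List.getElem?_drop]
      have he : (i : ℕ) + 1 + (k - 1) = (j : ℕ) := by omega
      rw [he]
      exact List.getElem?_eq_getElem hjq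
    have hHdropHead : (L.drop k).head? =
        some (units[((j : ℕ) + 1) % units.length]'(Nat.mod_lt _ hq0)) := by
      rw [List.head?_drop, hL, List.getElem?_append]
      by_cases hcase : (j : ℕ) + 1 < units.length
      · rw [if_pos (by rw [List.length_drop]; omega), List.getElem?_drop]
        have he : (i : ℕ) + 1 + k = (j : ℕ) + 1 := by omega
        rw [he, List.getElem?_eq_getElem hcase]
        have hm2 : ((j : ℕ) + 1) % units.length = (j : ℕ) + 1 := Nat.mod_eq_of_lt hcase
        simp only [hm2]
      · have hj1 : (j : ℕ) + 1 = units.length := by omega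
        rw [if_neg (by rw [List.length_drop]; omega), List.length_drop]
        have he : k - (units.length - ((i : ℕ) + 1)) = 0 := by omega
        rw [he, List.getElem?_take, if_pos (by omega : 0 < (i : ℕ) + 1),
          List.getElem?_eq_getElem hq0]
        have hm2 : ((j : ℕ) + 1) % units.length = 0 := by rw [hj1, Nat.mod_self]
        simp only [hm2]
    have htakeLast : (units.take ((i : ℕ) + 1)).getLast? = some (units[(i : ℕ)]'hiq) := by
      rw [List.getLast?_eq_getElem?, List.length_take,
        min_eq_left (by omega : (i : ℕ) + 1 ≤ units.length)]
      simp only [Nat.add_sub_cancel]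
      rw [List.getElem?_take, if_pos (by omega)]
      exact List.getElem?_eq_getElem hiq
    have hHdropLast : (L.drop k).getLast? = some (units[(i : ℕ)]'hiq) := by
      have h1 : L.getLast? = (units.take ((i : ℕ) + 1)).getLast? := by
        rw [hL, getLast?_append_of_ne_nil _ _ htakene]
      have hdropkne : L.drop k ≠ [] :=
        List.length_pos_iff.mp (by rw [List.length_drop, hLlen]; omega)
      have h3 : L.getLast? = (L.drop k).getLast? := by
        conv_lhs => rw [← List.take_append_drop k L]
        rw [getLast?_append_of_ne_nil _ _ hdropkne]
      rw [← h3, h1, htakeLast]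
    -- the two pieces
    set c1 := (L.take k).flatten with hc1
    set c2 := (L.drop k).flatten with hc2
    have hui1ne : units[(i : ℕ) + 1]'hi1 ≠ [] := hmem_ne _ (List.getElem_mem hi1)
    have hujne : units[(j : ℕ)]'hjq ≠ [] := hmem_ne _ (List.getElem_mem hjq)
    have huine : units[(i : ℕ)]'hiq ≠ [] := hmem_ne _ (List.getElem_mem hiq)
    have hujp1ne : units[((j : ℕ) + 1) % units.length]'(Nat.mod_lt _ hq0) ≠ [] :=
      hmem_ne _ (List.getElem_mem (Nat.mod_lt _ hq0))
    have hc1head : c1.head? = some (Sum.inr b) := by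
      rw [hc1, flatten_head? hHtake hui1ne, hb_head]
    have hc1last : c1.getLast? = some (Sum.inl a2) := by
      rw [hc1, flatten_getLast? hHtakeLast hujne, ha_last]
    have hc2head : c2.head? = some (Sum.inr b) := by
      rw [hc2, flatten_head? hHdropHead hujp1ne, hb2_head]
    have hc2last : c2.getLast? = some (Sum.inl a2) := by
      rw [hc2, flatten_getLast? hHdropLast huine, ha2_last]
    have hc1ne : c1 ≠ [] := by intro h0; rw [h0] at hc1head; simp at hc1head
    have hc2ne : c2 ≠ [] := by intro h0; rw [h0] at hc2head; simp at hc2head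
    have hw'c : w' = c1 ++ c2 := by
      rw [hw', hc1, hc2, ← List.flatten_append, List.take_append_drop]
    have hw2 : pow S w 2 = w ++ w := by
      rw [show (2 : ℕ) = 1 + 1 from rfl, pow_add, pow_one]
    have hw'inf : w' <:+: pow S w 2 := by
      rw [hw2, hw'DT]
      refine ⟨T, D, ?_⟩
      rw [hTD]
      simp only [List.append_assoc]
    have hw'ne : w' ≠ [] := by
      rw [hw'c]
      intro h0
      exact hc1ne (List.append_eq_nil_iff.mp h0).1
    have hw'str : IsStr S w' := isStr_infix (hpows 2 (by omega)) hw'inf hw'ne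
    have hc1str : IsStr S c1 :=
      isStr_infix hw'str (List.IsPrefix.isInfix ⟨c2, hw'c.symm⟩) hc1ne
    have hc2str : IsStr S c2 :=
      isStr_infix hw'str (List.IsSuffix.isInfix ⟨c1, hw'c.symm⟩) hc2ne
    -- the seam pair occurs inside w
    have hTlast : T.getLast? = some (Sum.inl a2) := by
      rw [hT, flatten_getLast? htakeLast huine, ha2_last]
    have hDhead : D.head? = some (Sum.inr b) := by
      have hdropHead : (units.drop ((i : ℕ) + 1)).head? = some (units[(i : ℕ) + 1]'hi1) := by
        rw [List.head?_drop]
        exact List.getElem?_eq_getElem hi1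
      rw [hD, flatten_head? hdropHead hui1ne, hb_head]
    obtain ⟨T', hT'⟩ := exists_eq_append_getLast? hTlast
    obtain ⟨D', hD'⟩ := exists_eq_cons_head? hDhead
    have hpairinf : [Sum.inl a2, Sum.inr b] <:+: w := by
      refine ⟨T', D', ?_⟩
      rw [hTD, hT', hD']
      simp
    have hpairstr : IsStr S [Sum.inl a2, Sum.inr b] := isStr_infix hstr hpairinf (by simp)
    have hvw : S.tgt a2 = S.tgt b := by
      have h1 := hpairstr.2.1
      simp [IsWalk, sylTgt, sylSrc] at h1
      exact h1
    have hba : b ≠ a2 := by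
      have h1 := hpairstr.2.2.1
      simp [Reduced, sylInv] at h1
      exact h1
    have hc1pows := isStr_pow hrelne hc1str hc1head hc1last hvw hba
    have hc2pows := isStr_pow hrelne hc2str hc2head hc2last hvw hba
    have hc1cyc : Cyclic S c1 := ⟨hc1ne, by
      rw [wSrc_eq_head, wTgt_eq_getLast, hc1head, hc1last]
      simp [sylSrc, sylTgt, hvw]⟩
    have hc2cyc : Cyclic S c2 := ⟨hc2ne, by
      rw [wSrc_eq_head, wTgt_eq_getLast, hc2head, hc2last]
      simp [sylSrc, sylTgt, hvw]⟩
    obtain ⟨parts1, hp1ne, hp1eq, hp1b⟩ :=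
      band_decomp c1 hc1ne hc1pows hc1cyc ⟨b, hc1head⟩ ⟨a2, hc1last⟩
    obtain ⟨parts2, hp2ne, hp2eq, hp2b⟩ :=
      band_decomp c2 hc2ne hc2pows hc2cyc ⟨b, hc2head⟩ ⟨a2, hc2last⟩
    refine hnotdec ⟨w', parts1 ++ parts2, ⟨T, D, hTD, hw'DT⟩, ?_, ?_, ?_⟩
    · rw [List.length_append]
      have hl1 := List.length_pos_iff.mpr hp1ne
      have hl2 := List.length_pos_iff.mpr hp2ne
      omega
    · rw [List.flatten_append, ← hp1eq, ← hp2eq, hw'c]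
    · intro p hp
      rcases List.mem_append.mp hp with h' | h'
      · exact ⟨p, hp1b p h', p, [], by simp, by simp⟩
      · exact ⟨p, hp2b p h', p, [], by simp, by simp⟩
  have hvne : (i0 : ℕ) ≠ (j0 : ℕ) := fun hh => hij0 (Fin.ext hh)
  rcases lt_or_gt_of_ne hvne with h | h
  · exact key i0 j0 h hf0
  · exact key j0 i0 h hf0.symm

end SA

open SA in
/-- A string algebra has only finitely many prime bands: the length of any prime band is
absolutely bounded, hence the set of prime bands is finite. -/
theorem finitely_many_prime_bands (S : SAQuiver) (hSA : SA.IsStringAlgebra S) :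
    (∃ N : ℕ, ∀ w : Word S, IsPrimeBand S w → w.length ≤ N) ∧
    {w : Word S | IsPrimeBand S w}.Finite := by
  obtain ⟨hV, hA, hrel3, hPfin, -, -, -, -⟩ := hSA
  haveI : Finite S.A := hA
  haveI : Fintype S.A := Fintype.ofFinite _
  have hrelne : ∀ p ∈ S.rel, p ≠ [] := fun p hp => (hrel3 p hp).1
  obtain ⟨m, hmub⟩ := (hPfin.image List.length).bddAbove
  have hm : ∀ p : List S.A, p ≠ [] → IsWalk S (p.map Sum.inl) →
      (∀ q ∈ S.rel, ¬ q <:+: p) → p.length ≤ m := by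
    intro p h1 h2 h3
    exact hmub ⟨p, ⟨h1, h2, h3⟩, rfl⟩
  have hbound : ∀ w : Word S, IsPrimeBand S w →
      w.length ≤ 2 * (m + 1) * (Fintype.card S.A * Fintype.card S.A) :=
    fun w hw => SA.prime_band_length_le hrelne hm hw
  refine ⟨⟨_, hbound⟩, ?_⟩
  exact (List.finite_length_le (Syl S)
    (2 * (m + 1) * (Fintype.card S.A * Fintype.card S.A))).subset
    fun w hw => hbound w hw
end

section
/- Let Λ be a string algebra, w a band-free string, and α a syllable such that the composition αw is a string. Then αw is generated by a path of length at most 2 in the extended weak bridge quiver: either αw is band-free (generated by a single weak zero bridge), or there is a unique decomposition w = w₁w₂ with w₁ of least length such that αw₁ is a cyclic permutation of a prime band b_w, and αw is obtained by inserting b_w appropriately, i.e., αw = u u' w₂ where u'u = b_w and αw₁ = u u' (possibly with u' empty). -/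
namespace SA

/-- Splitting a flatten along a two-part decomposition: the split point lies in some
part (possibly at its boundary). -/
lemma flatten_split {g : Type} :
    forall (L : List (List g)) (a b : List g), L ≠ [] → L.flatten = a ++ b →
      ∃ (L₁ : List (List g)) (x y : List g) (L₂ : List (List g)),
        L = L₁ ++ (x ++ y) :: L₂ ∧ a = L₁.flatten ++ x ∧ b = y ++ L₂.flatten := by
  intro L
  induction L with
  | nil => intro a b h; exact absurd rfl h
  | cons c L' ih =>
    intro a b _ h
    rw [List.flatten_cons] at h
    rcases List.append_eq_append_iff.mp h with ⟨a', ha, hf⟩ | ⟨c', hc, hb⟩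
    · -- a = c ++ a', L'.flatten = a' ++ b
      rcases eq_or_ne L' [] with hL' | hL'
      · subst hL'
        simp only [List.flatten_nil] at hf
        have hab : a' = [] ∧ b = [] := List.append_eq_nil_iff.mp hf.symm
        obtain ⟨ha', hb0⟩ := hab
        refine ⟨[], a, [], [], ?_, by simp, by simp [hb0]⟩
        simp [ha, ha', List.append_nil]
      · obtain ⟨L₁, x, y, L₂, h1, h2, h3⟩ := ih a' b hL' hf
        refine ⟨c :: L₁, x, y, L₂, by rw [h1]; rfl, ?_, h3⟩
        rw [ha, h2, List.flatten_cons, List.append_assoc]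
    · -- c = a ++ c', b = c' ++ L'.flatten
      exact ⟨[], a, c', L', by rw [← hc]; rfl, by simp, hb⟩

/-- An infix of `W ++ [α]` which is not an infix of `W` is a suffix ending in `α`. -/
lemma infix_concat_cases {S : SAQuiver} {u W : Word S} {α : Syl S}
    (h : u <:+: W ++ [α]) (hn : ¬ u <:+: W) (hne : u ≠ []) :
    ∃ s, u = s ++ [α] ∧ s <:+ W := by
  obtain ⟨x, y, hxy⟩ := h
  rcases List.eq_nil_or_concat y with hy | ⟨y', ylast, hy⟩
  · -- u is a suffix of W ++ [α]
    subst hy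
    rw [List.append_nil] at hxy
    obtain ⟨s, slast, hs⟩ := (List.eq_nil_or_concat u).resolve_left hne
    rw [List.concat_eq_append] at hs
    subst hs
    rw [← List.append_assoc] at hxy
    have hinj := List.append_inj' hxy.symm rfl
    refine ⟨s, ?_, x, ?_⟩
    · rw [(List.cons_eq_cons.mp hinj.2).1]
    · exact hinj.1.symm
  · rw [List.concat_eq_append] at hy
    subst hy
    rw [show x ++ u ++ (y' ++ [ylast]) = (x ++ u ++ y') ++ [ylast] by simp [List.append_assoc]]
      at hxy
    have hinj := List.append_inj' hxy rfl
    exact absurd ⟨x, y', by rw [← hinj.1]⟩ hn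

/-- A rotation of a band is nonempty. -/
lemma rotOfBand_ne_nil {S : SAQuiver} {u : Word S} (h : RotOfBand S u) : u ≠ [] := by
  obtain ⟨b, hb, l₁, l₂, h1, h2⟩ := h
  intro hu
  have : l₂ = [] ∧ l₁ = [] := List.append_eq_nil_iff.mp (h2 ▸ hu)
  exact hb.1.1 (by rw [h1, this.1, this.2]; rfl)

end SA

open SA in
/-- Let `w` be a band-free string and `α` a syllable such that `αw` is a string.  Then
either `αw` is band-free (it is generated by a single weak zero bridge), or there is a
decomposition `w = w₁w₂` with `w₁` of least length such that `αw₁` is a cyclic permutation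
of a prime band `bw`; writing `bw = u'u` with `αw₁ = u u'`, the string `αw = u u' w₂` is
generated by a path through `bw` in the extended weak bridge quiver (a path of length at
most 2). -/
theorem band_free_extension_generated (S : SAQuiver) (hSA : SA.IsStringAlgebra S)
    (w : Word S) (α : Syl S) (hw : BandFree S w) (hstr : IsStr S (w ++ [α])) :
    BandFree S (w ++ [α]) ∨
    ∃ w₁ w₂ bw uu uu' : Word S,
      w = w₂ ++ w₁ ∧ IsPrimeBand S bw ∧ bw = uu ++ uu' ∧ w₁ ++ [α] = uu' ++ uu ∧
      ∀ w₁' w₂' : Word S, w = w₂' ++ w₁' → RotOfBand S (w₁' ++ [α]) →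
        w₁.length ≤ w₁'.length := by
  classical
  by_cases hbf : BandFree S (w ++ [α])
  · exact Or.inl hbf
  right
  simp only [BandFree, not_not] at hbf
  obtain ⟨u, hu, hinf⟩ := hbf
  have hune : u ≠ [] := rotOfBand_ne_nil hu
  have hnotw : ¬ u <:+: w := fun h => hw ⟨u, hu, h⟩
  obtain ⟨s0, hs0eq, hs0suf⟩ := infix_concat_cases hinf hnotw hune
  set P : ℕ → Prop := fun n => ∃ s : Word S, s <:+ w ∧ RotOfBand S (s ++ [α]) ∧ s.length = n
    with hPdef
  have hP : ∃ n, P n := ⟨s0.length, s0, hs0suf, hs0eq ▸ hu, rfl⟩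
  obtain ⟨w₁, hw₁suf, hw₁rot, hw₁len⟩ := Nat.find_spec hP
  have hmin : ∀ w₁' w₂' : Word S, w = w₂' ++ w₁' → RotOfBand S (w₁' ++ [α]) →
      w₁.length ≤ w₁'.length := by
    intro w₁' w₂' heq hrot'
    have : P w₁'.length := ⟨w₁', ⟨w₂', heq.symm⟩, hrot', rfl⟩
    rw [hw₁len]
    exact Nat.find_min' hP this
  obtain ⟨b, hb, l₁, l₂, hb12, hv12⟩ := hw₁rot
  obtain ⟨w₂, hw₂⟩ := id hw₁suf
  have hprime : IsPrimeBand S b := by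
    refine ⟨hb, ?_⟩
    rintro ⟨w', parts, hrotw', hlen2, hflat, hparts⟩
    set v : Word S := w₁ ++ [α] with hvdef
    have hvb : v ~r b := by
      rw [hb12, hv12]
      exact (List.isRotated_append).symm
    have hbw' : b ~r w' := by
      obtain ⟨m₁, m₂, hbm, hw'm⟩ := hrotw'
      rw [hbm, hw'm]
      exact List.isRotated_append
    have hvw' : v ~r w' := hvb.trans hbw'
    obtain ⟨n, hn, hrot⟩ := List.isRotated_iff_mod.mp hvw'
    have hw'eq : w' = v.drop n ++ v.take n := by
      rw [← hrot, List.rotate_eq_drop_append_take hn]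
    have hpartsne : parts ≠ [] := by
      intro h; rw [h] at hlen2; simp at hlen2
    obtain ⟨P₁, x, y, P₂, hPeq, haeq, hbeq⟩ :=
      flatten_split parts (v.drop n) (v.take n) hpartsne (by rw [← hflat, hw'eq])
    have hpmem : (x ++ y) ∈ parts := by rw [hPeq]; simp
    have hpne : x ++ y ≠ [] := rotOfBand_ne_nil (hparts _ hpmem)
    have hvdecomp : v = y ++ P₂.flatten ++ P₁.flatten ++ x := by
      conv_lhs => rw [← List.take_append_drop n v]
      rw [hbeq, haeq]
      simp [List.append_assoc]
    have hvlen : v.length = y.length + P₂.flatten.length + P₁.flatten.length + x.length := by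
      rw [hvdecomp]; simp only [List.length_append]
    -- find a part q inside a single copy of v
    have hkey : ∃ q : Word S, q ∈ parts ∧ q <:+: v ∧ q.length + (x ++ y).length ≤ v.length := by
      rcases List.eq_nil_or_concat P₂ with hP₂ | ⟨P₂', q0, hP₂⟩
      · rcases List.eq_nil_or_concat P₁ with hP₁ | ⟨P₁', q0, hP₁⟩
        · exfalso
          rw [hPeq, hP₁, hP₂] at hlen2
          simp at hlen2
        · rw [List.concat_eq_append] at hP₁
          refine ⟨q0, by rw [hPeq, hP₁]; simp, ?_, ?_⟩
          · refine ⟨y ++ P₂.flatten ++ P₁'.flatten, x, ?_⟩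
            rw [hvdecomp, hP₁]
            simp [List.append_assoc]
          · have hq0 : q0.length ≤ P₁.flatten.length := by
              rw [hP₁]; simp
            have hxylen : (x ++ y).length = x.length + y.length := by simp
            omega
      · rw [List.concat_eq_append] at hP₂
        -- take the first element of P₂ instead? q0 is the last; still fine
        refine ⟨q0, by rw [hPeq, hP₂]; simp, ?_, ?_⟩
        · refine ⟨y ++ P₂'.flatten, P₁.flatten ++ x, ?_⟩
          rw [hvdecomp, hP₂]
          simp [List.append_assoc]
        · have hq0 : q0.length ≤ P₂.flatten.length := by
            rw [hP₂]; simp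
          have hxylen : (x ++ y).length = x.length + y.length := by simp
          omega
    obtain ⟨q, hqmem, hqinf, hqlen⟩ := hkey
    have hqrot : RotOfBand S q := hparts _ hqmem
    have hqne : q ≠ [] := rotOfBand_ne_nil hqrot
    have hxyge : 1 ≤ (x ++ y).length := by
      cases hxy : x ++ y with
      | nil => exact absurd hxy hpne
      | cons z zs => simp
    by_cases hq1 : q <:+: w₁
    · exact hw ⟨q, hqrot, hq1.trans (hw₁suf.isInfix)⟩
    · obtain ⟨s, hseq, hssuf⟩ := infix_concat_cases hqinf hq1 hqne
      have hssuf' : s <:+ w := hssuf.trans hw₁suf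
      obtain ⟨t, ht⟩ := hssuf'
      have := hmin s t ht.symm (hseq ▸ hqrot)
      have hqlen' : q.length = s.length + 1 := by rw [hseq]; simp
      have hvlen' : v.length = w₁.length + 1 := by rw [hvdef]; simp
      omega
  exact ⟨w₁, w₂, b, l₁, l₂, hw₂.symm, hprime, hb12, hv12, hmin⟩
end
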